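/- If G is a finite simple graph of order n ≥ 3 having exactly k ≥ 1 vertices of degree n − 1, then b_dR(G) = ⌈k/2⌉. -/
import Mathlib


/-- A double Roman dominating function (DRDF) on a graph `G`: a function
`f : V → ℕ` taking values in `{0,1,2,3}` such that every vertex assigned `0`
has a neighbor assigned `3` or two distinct neighbors assigned `2`, and every
vertex assigned `1` has a neighbor assigned at least `2`. -/
def IsDRDF {V : Type*} (G : SimpleGraph V) (f : V → ℕ) : Prop :=
  (∀ v, f v ≤ 3) ∧
  (∀ v, f v = 0 →
    (∃ w, G.Adj v w ∧ f w = 3) ∨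
    (∃ w₁ w₂, G.Adj v w₁ ∧ G.Adj v w₂ ∧ w₁ ≠ w₂ ∧ f w₁ = 2 ∧ f w₂ = 2)) ∧
  (∀ v, f v = 1 → ∃ w, G.Adj v w ∧ 2 ≤ f w)

/-- The double Roman domination number `γ_dR(G)`: the minimum weight of a DRDF on `G`. -/
noncomputable def gammaDR {V : Type*} [Fintype V] (G : SimpleGraph V) : ℕ :=
  sInf {k | ∃ f : V → ℕ, IsDRDF G f ∧ ∑ v, f v = k}

/-- The double Roman bondage number `b_dR(G)`: the minimum cardinality of a set
`B` of edges of `G` such that `γ_dR(G - B) > γ_dR(G)`. -/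
noncomputable def bDR {V : Type*} [Fintype V] (G : SimpleGraph V) : ℕ :=
  sInf {k | ∃ B : Finset (Sym2 V), ↑B ⊆ G.edgeSet ∧ B.card = k ∧
    gammaDR G < gammaDR (G.deleteEdges ↑B)}


section Aux

variable {V : Type*} [Fintype V] [DecidableEq V]

lemma pair_le_sum (f : V → ℕ) {a b : V} (h : a ≠ b) : f a + f b ≤ ∑ v, f v := by
  rw [← Finset.sum_pair h]
  exact Finset.sum_le_sum_of_subset (Finset.subset_univ _)

lemma single_le_sum' (f : V → ℕ) (a : V) : f a ≤ ∑ v, f v :=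
  Finset.single_le_sum (fun i _ => Nat.zero_le _) (Finset.mem_univ a)

lemma drdf_small (H : SimpleGraph V) (h3 : 3 ≤ Fintype.card V)
    (f : V → ℕ) (hf : IsDRDF H f) (hs : ∑ v, f v ≤ 3) :
    ∑ v, f v = 3 ∧ ∃ v, ∀ w, w ≠ v → H.Adj v w := by
  obtain ⟨hle, h0, h1⟩ := hf
  by_cases hex3 : ∃ v, f v = 3
  · obtain ⟨v, hv⟩ := hex3
    have hsum : ∑ v, f v = 3 := le_antisymm hs (hv ▸ single_le_sum' f v)
    refine ⟨hsum, v, fun w hw => ?_⟩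
    have hvw := pair_le_sum f (Ne.symm hw)
    have hw0 : f w = 0 := by omega
    rcases h0 w hw0 with ⟨x, hadj, hx3⟩ | ⟨w1, w2, ha1, ha2, hne, h21, h22⟩
    · have hxv : x = v := by
        by_contra hne
        have := pair_le_sum f (show x ≠ v from hne)
        omega
      subst hxv
      exact hadj.symm
    · exfalso
      rcases eq_or_ne w1 v with rfl | hne1
      · omega
      · have := pair_le_sum f hne1; omega
  · exfalso
    push_neg at hex3
    by_cases hex2 : ∃ v, f v = 2
    · obtain ⟨v, hv2⟩ := hex2
      have herase : ∃ a, a ≠ v ∧ f a = 0 := by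
        by_contra hc
        push_neg at hc
        have hcard : 2 ≤ (Finset.univ.erase v).card := by
          rw [Finset.card_erase_of_mem (Finset.mem_univ v), Finset.card_univ]
          omega
        have hone : ∀ x ∈ Finset.univ.erase v, 1 ≤ f x := by
          intro x hx
          have hxv := (Finset.mem_erase.1 hx).1
          have := hc x hxv
          omega
        have hsum2 : (Finset.univ.erase v).card • 1 ≤ ∑ x ∈ Finset.univ.erase v, f x :=
          Finset.card_nsmul_le_sum _ _ _ hone
        have htot : f v + ∑ x ∈ Finset.univ.erase v, f x = ∑ x, f x :=
          Finset.add_sum_erase _ f (Finset.mem_univ v)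
        simp only [smul_eq_mul, mul_one] at hsum2
        omega
      obtain ⟨a, hav, ha0⟩ := herase
      rcases h0 a ha0 with ⟨x, _, hx3⟩ | ⟨w1, w2, _, _, hne, h21, h22⟩
      · exact hex3 x hx3
      · rcases eq_or_ne w1 v with rfl | hne1
        · have := pair_le_sum f (Ne.symm hne); omega
        · have := pair_le_sum f hne1; omega
    · push_neg at hex2
      have hle1 : ∀ v, f v ≤ 1 := by
        intro v
        have := hle v; have := hex3 v; have := hex2 v; omega
      by_cases hex1 : ∃ v, f v = 1
      · obtain ⟨v, hv1⟩ := hex1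
        obtain ⟨x, _, hx2⟩ := h1 v hv1
        have := hle1 x; omega
      · push_neg at hex1
        have hpos : 0 < Fintype.card V := by omega
        obtain ⟨v⟩ := Fintype.card_pos_iff.mp hpos
        have hv0 : f v = 0 := by have := hle1 v; have := hex1 v; omega
        rcases h0 v hv0 with ⟨x, _, hx3⟩ | ⟨w1, _, _, _, _, h21, _⟩
        · exact hex3 x hx3
        · have := hle1 w1; omega

lemma const3_drdf (H : SimpleGraph V) : IsDRDF H (fun _ => 3) :=
  ⟨fun _ => le_refl 3, fun _ h => by simp at h, fun _ h => by simp at h⟩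

lemma gammaDR_nonempty (H : SimpleGraph V) :
    {k | ∃ f : V → ℕ, IsDRDF H f ∧ ∑ v, f v = k}.Nonempty :=
  ⟨_, (fun _ => 3), const3_drdf H, rfl⟩

lemma gammaDR_mem (H : SimpleGraph V) :
    ∃ f : V → ℕ, IsDRDF H f ∧ ∑ v, f v = gammaDR H :=
  Nat.sInf_mem (gammaDR_nonempty H)

lemma gammaDR_le (H : SimpleGraph V) (f : V → ℕ) (hf : IsDRDF H f) :
    gammaDR H ≤ ∑ v, f v :=
  Nat.sInf_le ⟨f, hf, rfl⟩

lemma universal_drdf (H : SimpleGraph V) (u : V) (hu : ∀ w, w ≠ u → H.Adj u w) :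
    IsDRDF H (fun v => if v = u then 3 else 0) := by
  refine ⟨fun v => by dsimp only; split <;> omega, fun v hv => ?_, fun v hv => ?_⟩
  · have hvu : v ≠ u := by
      intro h; subst h; simp at hv
    left
    exact ⟨u, (hu v hvu).symm, if_pos rfl⟩
  · dsimp only at hv; split at hv <;> omega

lemma gamma_eq_three (H : SimpleGraph V) (h3 : 3 ≤ Fintype.card V)
    (u : V) (hu : ∀ w, w ≠ u → H.Adj u w) : gammaDR H = 3 := by
  have hle : gammaDR H ≤ 3 := by
    have := gammaDR_le H _ (universal_drdf H u hu)
    simpa using this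
  obtain ⟨g, hg, hsum⟩ := gammaDR_mem H
  have := (drdf_small H h3 g hg (by omega)).1
  omega

lemma gamma_ge_four (H : SimpleGraph V) (h3 : 3 ≤ Fintype.card V)
    (hno : ∀ v : V, ∃ w, w ≠ v ∧ ¬H.Adj v w) : 4 ≤ gammaDR H := by
  by_contra hc
  push_neg at hc
  obtain ⟨g, hg, hsum⟩ := gammaDR_mem H
  obtain ⟨_, v, hv⟩ := drdf_small H h3 g hg (by omega)
  obtain ⟨w, hwv, hnadj⟩ := hno v
  exact hnadj (hv w hwv)

lemma sym2_filter_card (e : Sym2 V) : (Finset.univ.filter (· ∈ e)).card ≤ 2 := by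
  induction e using Sym2.ind with
  | _ a b =>
    have hsub : Finset.univ.filter (· ∈ s(a, b)) ⊆ {a, b} := by
      intro x hx
      simp only [Finset.mem_filter, Sym2.mem_iff] at hx
      simp only [Finset.mem_insert, Finset.mem_singleton]
      exact hx.2
    calc (Finset.univ.filter (· ∈ s(a, b))).card ≤ ({a, b} : Finset V).card :=
          Finset.card_le_card hsub
      _ ≤ 2 := by
          have := Finset.card_insert_le a ({b} : Finset V)
          simpa using this

lemma pair_cover (G : SimpleGraph V) (hV : 2 ≤ Fintype.card V) :
    ∀ m (U : Finset V), U.card = m → (∀ u ∈ U, ∀ w, w ≠ u → G.Adj u w) →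
    ∃ B : Finset (Sym2 V), ↑B ⊆ G.edgeSet ∧ B.card ≤ (m + 1) / 2 ∧
      ∀ u ∈ U, ∃ e ∈ B, u ∈ e := by
  intro m
  induction m using Nat.strong_induction_on with
  | _ m ih =>
    intro U hcard hU
    match m, hcard with
    | 0, hcard =>
      refine ⟨∅, by simp, by simp, ?_⟩
      rw [Finset.card_eq_zero] at hcard
      simp [hcard]
    | 1, hcard =>
      obtain ⟨u0, hUeq⟩ := Finset.card_eq_one.1 hcard
      obtain ⟨w0, hw0⟩ := Fintype.exists_ne_of_one_lt_card (by omega) u0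
      have hadj : G.Adj u0 w0 := hU u0 (by simp [hUeq]) w0 hw0
      refine ⟨{s(u0, w0)}, ?_, by simp, ?_⟩
      · intro e he
        simp only [Finset.coe_singleton, Set.mem_singleton_iff] at he
        subst he
        exact G.mem_edgeSet.2 hadj
      · intro x hx
        rw [hUeq, Finset.mem_singleton] at hx
        exact ⟨s(u0, w0), Finset.mem_singleton_self _, by simp [hx]⟩
    | (j + 2), hcard =>
      have hU1 : U.Nonempty := Finset.card_pos.1 (by omega)
      obtain ⟨u, hu⟩ := hU1
      have hU2 : (U.erase u).Nonempty := Finset.card_pos.1 (by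
        rw [Finset.card_erase_of_mem hu]; omega)
      obtain ⟨u', hu'⟩ := hU2
      have hu'U : u' ∈ U := Finset.mem_of_mem_erase hu'
      have hne : u' ≠ u := (Finset.mem_erase.1 hu').1
      have hadj : G.Adj u u' := hU u hu u' hne
      have hcard' : ((U.erase u).erase u').card = j := by
        rw [Finset.card_erase_of_mem hu', Finset.card_erase_of_mem hu]
        omega
      obtain ⟨B', hB'sub, hB'card, hB'cov⟩ := ih j (by omega) ((U.erase u).erase u') hcard'
        (fun x hx => hU x (Finset.mem_of_mem_erase (Finset.mem_of_mem_erase hx)))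
      refine ⟨insert s(u, u') B', ?_, ?_, ?_⟩
      · rw [Finset.coe_insert]
        exact Set.insert_subset (G.mem_edgeSet.2 hadj) hB'sub
      · calc (insert s(u, u') B').card ≤ B'.card + 1 := Finset.card_insert_le _ _
          _ ≤ (j + 1) / 2 + 1 := by omega
          _ ≤ (j + 2 + 1) / 2 := by omega
      · intro x hx
        by_cases hxu : x = u
        · exact ⟨s(u, u'), Finset.mem_insert_self _ _, by simp [hxu]⟩
        · by_cases hxu' : x = u'
          · exact ⟨s(u, u'), Finset.mem_insert_self _ _, by simp [hxu']⟩
          · obtain ⟨e, he, hxe⟩ := hB'cov x (Finset.mem_erase.2 ⟨hxu', Finset.mem_erase.2 ⟨hxu, hx⟩⟩)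
            exact ⟨e, Finset.mem_insert_of_mem he, hxe⟩

lemma degree_iff (G : SimpleGraph V) [DecidableRel G.Adj] (v : V) :
    G.degree v = Fintype.card V - 1 ↔ ∀ w, w ≠ v → G.Adj v w := by
  have hsub : G.neighborFinset v ⊆ Finset.univ.erase v := by
    intro x hx
    rw [SimpleGraph.mem_neighborFinset] at hx
    exact Finset.mem_erase.2 ⟨hx.ne', Finset.mem_univ x⟩
  have hce : (Finset.univ.erase v).card = Fintype.card V - 1 := by
    rw [Finset.card_erase_of_mem (Finset.mem_univ v), Finset.card_univ]
  constructor
  · intro h w hw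
    have heq : G.neighborFinset v = Finset.univ.erase v :=
      Finset.eq_of_subset_of_card_le hsub (by
        rw [hce, ← h, SimpleGraph.card_neighborFinset_eq_degree])
    have : w ∈ G.neighborFinset v := heq ▸ Finset.mem_erase.2 ⟨hw, Finset.mem_univ w⟩
    rwa [SimpleGraph.mem_neighborFinset] at this
  · intro h
    have heq : G.neighborFinset v = Finset.univ.erase v := by
      apply Finset.Subset.antisymm hsub
      intro x hx
      rw [SimpleGraph.mem_neighborFinset]
      exact h x (Finset.mem_erase.1 hx).1
    rw [← SimpleGraph.card_neighborFinset_eq_degree, heq, hce]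

end Aux


/-- If `G` has order `n ≥ 3` and exactly `k ≥ 1` vertices of degree `n - 1`,
then `b_dR(G) = ⌈k/2⌉`. -/
theorem bDR_of_k_universal_vertices {V : Type*} [Fintype V] [DecidableEq V]
    (G : SimpleGraph V) [DecidableRel G.Adj] (n k : ℕ)
    (hn : Fintype.card V = n) (hn3 : 3 ≤ n) (hk : 1 ≤ k)
    (hdeg : (Finset.univ.filter fun v => G.degree v = n - 1).card = k) :
    bDR G = (k + 1) / 2 := by
  subst hn
  set U := Finset.univ.filter (fun v => G.degree v = Fintype.card V - 1) with hUdef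
  have hUmem : ∀ v, v ∈ U ↔ ∀ w, w ≠ v → G.Adj v w := by
    intro v
    rw [hUdef, Finset.mem_filter]
    simp [degree_iff G v]
  have hUne : U.Nonempty := Finset.card_pos.1 (by rw [hdeg]; omega)
  obtain ⟨u0, hu0⟩ := hUne
  have hγ : gammaDR G = 3 := gamma_eq_three G hn3 u0 ((hUmem u0).1 hu0)
  obtain ⟨B, hBsub, hBcard, hBcov⟩ :=
    pair_cover G (by omega) k U hdeg (fun u hu => (hUmem u).1 hu)
  have hmem : B.card ∈ {k | ∃ B : Finset (Sym2 V), ↑B ⊆ G.edgeSet ∧ B.card = k ∧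
      gammaDR G < gammaDR (G.deleteEdges ↑B)} := by
    refine ⟨B, hBsub, rfl, ?_⟩
    rw [hγ]
    have h4 : 4 ≤ gammaDR (G.deleteEdges ↑B) := by
      apply gamma_ge_four _ hn3
      intro v
      by_cases hv : v ∈ U
      · obtain ⟨e, heB, hve⟩ := hBcov v hv
        obtain ⟨w, rfl⟩ := Sym2.mem_iff_exists.1 hve
        have hadj : G.Adj v w := G.mem_edgeSet.1 (hBsub heB)
        refine ⟨w, hadj.ne', fun h => ?_⟩
        rw [SimpleGraph.deleteEdges_adj] at h
        exact h.2 (Finset.mem_coe.2 heB)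
      · rw [hUmem] at hv
        push_neg at hv
        obtain ⟨w, hwv, hnadj⟩ := hv
        refine ⟨w, hwv, fun h => hnadj ?_⟩
        rw [SimpleGraph.deleteEdges_adj] at h
        exact h.1
    omega
  have hupper : bDR G ≤ (k + 1) / 2 := le_trans (Nat.sInf_le hmem) hBcard
  have hlower : (k + 1) / 2 ≤ bDR G := by
    obtain ⟨B', hB'sub, hB'card, hB'γ⟩ := Nat.sInf_mem (⟨B.card, hmem⟩ :
      Set.Nonempty {k | ∃ B : Finset (Sym2 V), ↑B ⊆ G.edgeSet ∧ B.card = k ∧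
        gammaDR G < gammaDR (G.deleteEdges ↑B)})
    have hcov : ∀ u ∈ U, ∃ e ∈ B', u ∈ e := by
      intro u hu
      by_contra hc
      push_neg at hc
      have huniv : ∀ w, w ≠ u → (G.deleteEdges ↑B').Adj u w := by
        intro w hw
        rw [SimpleGraph.deleteEdges_adj]
        exact ⟨(hUmem u).1 hu w hw,
          fun hmem' => hc _ (Finset.mem_coe.1 hmem') (by simp)⟩
      have := gamma_eq_three (G.deleteEdges ↑B') hn3 u huniv
      omega
    have hUsub : U ⊆ B'.biUnion (fun e => Finset.univ.filter (· ∈ e)) := by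
      intro u hu
      obtain ⟨e, he, hue⟩ := hcov u hu
      exact Finset.mem_biUnion.2 ⟨e, he, Finset.mem_filter.2 ⟨Finset.mem_univ u, hue⟩⟩
    have hc1 := Finset.card_le_card hUsub
    have hc2 := Finset.card_biUnion_le (s := B') (t := fun e => Finset.univ.filter (· ∈ e))
    have hc3 : ∑ e ∈ B', (Finset.univ.filter (· ∈ e)).card ≤ ∑ _e ∈ B', 2 :=
      Finset.sum_le_sum (fun e _ => sym2_filter_card e)
    rw [Finset.sum_const, smul_eq_mul] at hc3
    rw [hdeg] at hc1
    have hbdr : bDR G = sInf {k | ∃ B : Finset (Sym2 V), ↑B ⊆ G.edgeSet ∧ B.card = k ∧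
        gammaDR G < gammaDR (G.deleteEdges ↑B)} := rfl
    omega
  omega
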